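/- arXiv:2510.11377 — 3 statements merged into one kernel-verified Lean document; each statement's English description precedes it below -/
import Mathlib

section
/- Let T ⊂ ℝ^n be a k-dimensional subspace, f : T → T^⊥ differentiable at x, S = Im(id_T + ∇f(x)) the tangent plane of the graph, and v ∈ ℝ^n. If ∂_t f(x) = T^⊥ v - ∇f(x)(T v), then S^⊥(∂_t f(x)) = S^⊥ v, where S^⊥ denotes orthogonal projection onto the orthogonal complement of S. -/
/-- Let `T ⊂ ℝ^n` be a `k`-dimensional subspace, `f : T → T^⊥` differentiable at `x` with
derivative `D = ∇f(x)`, `S = Im(id_T + ∇f(x))` the tangent plane of the graph, and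
`v ∈ ℝ^n`. If `∂_t f(x) = T^⊥ v - ∇f(x)(T v)`, then `S^⊥(∂_t f(x)) = S^⊥ v`. -/
theorem stmt4 (n k : ℕ) (T : Submodule ℝ (EuclideanSpace ℝ (Fin n)))
    (hT : Module.finrank ℝ T = k)
    (f : T → Tᗮ) (x : T) (D : T →L[ℝ] Tᗮ) (hf : HasFDerivAt f D x)
    (S : Submodule ℝ (EuclideanSpace ℝ (Fin n)))
    (hS : S = LinearMap.range (T.subtype + Tᗮ.subtype ∘ₗ (D : T →ₗ[ℝ] Tᗮ)))
    (v : EuclideanSpace ℝ (Fin n)) (w : Tᗮ)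
    (hw : w = Tᗮ.orthogonalProjection v - D (T.orthogonalProjection v)) :
    Sᗮ.orthogonalProjection ((w : EuclideanSpace ℝ (Fin n)))
      = Sᗮ.orthogonalProjection v := by
  have hvw : v - (w : EuclideanSpace ℝ (Fin n)) ∈ S := by
    rw [hS]
    refine ⟨T.orthogonalProjection v, ?_⟩
    have hsum : (↑((T.orthogonalProjection) v) : EuclideanSpace ℝ (Fin n))
        = v - ↑((Tᗮ.orthogonalProjection) v) := by
      have h := DFunLike.congr_fun (T.id_eq_sum_starProjection_self_orthogonalComplement) v
      simp only [ContinuousLinearMap.id_apply, ContinuousLinearMap.add_apply,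
        ContinuousLinearMap.coe_comp', Function.comp_apply, Submodule.coe_subtypeL'] at h
      rw [eq_sub_iff_add_eq]
      exact h.symm
    simp only [LinearMap.add_apply, Submodule.coe_subtype, LinearMap.coe_comp,
      Function.comp_apply, ContinuousLinearMap.coe_coe, hw, AddSubgroupClass.coe_sub]
    rw [hsum]
    abel
  have h0 : Sᗮ.orthogonalProjection (v - (w : EuclideanSpace ℝ (Fin n))) = 0 :=
    Submodule.orthogonalProjectionOnto_apply_of_mem_orthogonal
      (Submodule.le_orthogonal_orthogonal S hvw)
  have := map_sub (Sᗮ.orthogonalProjection) v (w : EuclideanSpace ℝ (Fin n))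
  rw [h0] at this
  exact (sub_eq_zero.mp this.symm).symm
end

section
/- For linear maps P : ℝ^k → ℝ^{n-k}, vectors ξ ∈ ℝ^k and η ∈ ℝ^{n-k}, the second derivative of the area integrand satisfies the Legendre–Hadamard inequality: ∑_{i,j,l,a,b} ∂_{P_j^b}(√(g(P)) g^{il}(P) P_l^a) ξ_i ξ_j η^a η^b ≥ (√(g(P)) / (1 + ‖P‖_F²)²) |ξ|² |η|², where g_{ij}(P) = δ_{ij} + ∑_a P_i^a P_j^a, (g^{ij}) = (g_{ij})^{-1}, g(P) = det(g_{ij}(P)), and ‖P‖_F is the Frobenius norm. -/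
open Matrix

namespace Stmt15Aux

lemma dot_swap {n : ℕ} (A : Matrix (Fin n) (Fin n) ℝ) (hA : Aᵀ = A) (x y : Fin n → ℝ) :
    x ⬝ᵥ A *ᵥ y = y ⬝ᵥ A *ᵥ x := by
  rw [dotProduct_mulVec, ← mulVec_transpose, hA, dotProduct_comm]

lemma dot_shift {n p : ℕ} (A : Matrix (Fin n) (Fin p) ℝ) (v : Fin p → ℝ) (w : Fin n → ℝ) :
    (A *ᵥ v) ⬝ᵥ w = v ⬝ᵥ (Aᵀ *ᵥ w) := by
  rw [dotProduct_comm, dotProduct_mulVec, ← mulVec_transpose, dotProduct_comm]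

lemma cs_form {n : ℕ} (G : Matrix (Fin n) (Fin n) ℝ) (hA : Gᵀ = G)
    (hpsd : ∀ y, 0 ≤ y ⬝ᵥ G *ᵥ y) (x y : Fin n → ℝ) :
    (x ⬝ᵥ G *ᵥ y) ^ 2 ≤ (x ⬝ᵥ G *ᵥ x) * (y ⬝ᵥ G *ᵥ y) := by
  have h := discrim_le_zero (a := y ⬝ᵥ G *ᵥ y) (b := 2 * (x ⬝ᵥ G *ᵥ y)) (c := x ⬝ᵥ G *ᵥ x) ?_
  · rw [discrim] at h; nlinarith
  · intro t
    have h0 := hpsd (x + t • y)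
    have e : (x + t • y) ⬝ᵥ G *ᵥ (x + t • y)
        = (y ⬝ᵥ G *ᵥ y) * (t * t) + 2 * (x ⬝ᵥ G *ᵥ y) * t + x ⬝ᵥ G *ᵥ x := by
      have hs := dot_swap G hA x y
      simp only [mulVec_add, mulVec_smul, dotProduct_add, add_dotProduct,
        dotProduct_smul, smul_dotProduct, smul_eq_mul]
      rw [hs]; ring
    rw [e] at h0; exact h0

lemma key_bound {n : ℕ} (G K : Matrix (Fin n) (Fin n) ℝ) (x : Fin n → ℝ) (C : ℝ)
    (hGsym : Gᵀ = G) (hGK : G * K = 1)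
    (hpsd : ∀ y, 0 ≤ y ⬝ᵥ G *ᵥ y)
    (hup : x ⬝ᵥ G *ᵥ x ≤ C * (x ⬝ᵥ x)) (hC : 0 < C) :
    (x ⬝ᵥ x) / C ≤ x ⬝ᵥ K *ᵥ x := by
  by_cases hx : x = 0
  · simp [hx]
  · have hT0 : 0 < x ⬝ᵥ x :=
      lt_of_le_of_ne (Finset.sum_nonneg fun i _ => mul_self_nonneg _)
        (fun h => hx (dotProduct_self_eq_zero.mp h.symm))
    have hcs := cs_form G hGsym hpsd x (K *ᵥ x)
    have h2 : x ⬝ᵥ G *ᵥ (K *ᵥ x) = x ⬝ᵥ x := by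
      rw [mulVec_mulVec, hGK, one_mulVec]
    have h3 : (K *ᵥ x) ⬝ᵥ G *ᵥ (K *ᵥ x) = x ⬝ᵥ K *ᵥ x := by
      rw [mulVec_mulVec, hGK, one_mulVec, dotProduct_comm]
    rw [h2, h3] at hcs
    set T := x ⬝ᵥ x
    set a := x ⬝ᵥ G *ᵥ x
    set b := x ⬝ᵥ K *ᵥ x
    have ha0 : 0 ≤ a := hpsd x
    have ha : 0 < a := by
      rcases ha0.lt_or_eq with h | h
      · exact h
      · exfalso; rw [← h, zero_mul] at hcs; nlinarith
    have hb : 0 < b := by nlinarith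
    rw [div_le_iff₀ hC]
    nlinarith [mul_le_mul_of_nonneg_right hup hb.le]

lemma quad_form_eq {k m : ℕ} (B : Matrix (Fin k) (Fin m) ℝ) (x : Fin k → ℝ) :
    x ⬝ᵥ (1 + B * Bᵀ) *ᵥ x = x ⬝ᵥ x + ∑ a, (∑ i, B i a * x i) ^ 2 := by
  rw [add_mulVec, one_mulVec, dotProduct_add]
  congr 1
  rw [← mulVec_mulVec, dotProduct_mulVec, ← mulVec_transpose]
  simp only [dotProduct, mulVec, transpose_apply]
  exact Finset.sum_congr rfl fun a _ => by rw [sq]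

lemma psd_G {k m : ℕ} (B : Matrix (Fin k) (Fin m) ℝ) (x : Fin k → ℝ) :
    0 ≤ x ⬝ᵥ (1 + B * Bᵀ) *ᵥ x := by
  rw [quad_form_eq]
  have h1 : (0:ℝ) ≤ x ⬝ᵥ x := Finset.sum_nonneg fun i _ => mul_self_nonneg _
  have h2 : (0:ℝ) ≤ ∑ a, (∑ i, B i a * x i) ^ 2 := Finset.sum_nonneg fun a _ => sq_nonneg _
  linarith

lemma sym_G {k m : ℕ} (B : Matrix (Fin k) (Fin m) ℝ) :
    ((1 : Matrix (Fin k) (Fin k) ℝ) + B * Bᵀ)ᵀ = 1 + B * Bᵀ := by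
  rw [transpose_add, transpose_one, transpose_mul, transpose_transpose]

lemma posdef_G {k m : ℕ} (B : Matrix (Fin k) (Fin m) ℝ) :
    ((1 : Matrix (Fin k) (Fin k) ℝ) + B * Bᵀ).PosDef := by
  rw [posDef_iff_dotProduct_mulVec]
  constructor
  · show _ᴴ = _
    rw [conjTranspose_eq_transpose_of_trivial, sym_G]
  · intro x hx
    have hst : star x = x := by simp
    rw [hst, quad_form_eq]
    have hT0 : 0 < x ⬝ᵥ x :=
      lt_of_le_of_ne (Finset.sum_nonneg fun i _ => mul_self_nonneg _)
        (fun h => hx (dotProduct_self_eq_zero.mp h.symm))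
    have h2 : (0:ℝ) ≤ ∑ a, (∑ i, B i a * x i) ^ 2 := Finset.sum_nonneg fun a _ => sq_nonneg _
    linarith

lemma upper_G {k m : ℕ} (B : Matrix (Fin k) (Fin m) ℝ) (x : Fin k → ℝ) :
    x ⬝ᵥ (1 + B * Bᵀ) *ᵥ x ≤ (1 + ∑ i, ∑ a, B i a ^ 2) * (x ⬝ᵥ x) := by
  rw [quad_form_eq, add_mul, one_mul]
  have h1 : ∑ a, (∑ i, B i a * x i) ^ 2 ≤ (∑ a, ∑ i, B i a ^ 2) * (x ⬝ᵥ x) := by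
    rw [Finset.sum_mul]
    refine Finset.sum_le_sum fun a _ => ?_
    have h := Finset.sum_mul_sq_le_sq_mul_sq Finset.univ (fun i => B i a) x
    calc (∑ i, B i a * x i) ^ 2 ≤ (∑ i, B i a ^ 2) * (∑ i, x i ^ 2) := h
      _ = (∑ i, B i a ^ 2) * (x ⬝ᵥ x) := by
          congr 1; exact Finset.sum_congr rfl fun i _ => pow_two (x i)
  rw [Finset.sum_comm (γ := Fin m)] at h1
  linarith

lemma coord_contDiff {k m : ℕ} (i : Fin k) (a : Fin m) :
    ContDiff ℝ 2 (fun Q : Fin k → Fin m → ℝ => Q i a) :=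
  ((ContinuousLinearMap.proj (R := ℝ) (φ := fun _ : Fin m => ℝ) a).comp
    (ContinuousLinearMap.proj (R := ℝ) (φ := fun _ : Fin k => Fin m → ℝ) i)).contDiff

lemma contDiff_detpart (k m : ℕ) :
    ContDiff ℝ 2 (fun Q : Fin k → Fin m → ℝ =>
      ((1 : Matrix (Fin k) (Fin k) ℝ) + Matrix.of Q * (Matrix.of Q)ᵀ).det) := by
  simp only [det_apply', Matrix.add_apply, Matrix.mul_apply, Matrix.transpose_apply,
    Matrix.of_apply, Matrix.one_apply]
  apply ContDiff.sum
  intro σ _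
  apply ContDiff.mul contDiff_const
  apply contDiff_prod
  intro i _
  apply ContDiff.add contDiff_const
  apply ContDiff.sum
  intro a _
  exact (coord_contDiff _ _).mul (coord_contDiff _ _)

lemma second_line {E : Type*} [NormedAddCommGroup E] [NormedSpace ℝ E] (f : E → ℝ)
    (hf : ContDiff ℝ 2 f) (x v : E) :
    iteratedFDeriv ℝ 2 f x ![v, v] = deriv (deriv (fun t : ℝ => f (x + t • v))) 0 := by
  have hline : ∀ t : ℝ, HasDerivAt (fun s : ℝ => x + s • v) v t := fun t => by
    simpa using ((hasDerivAt_id t).smul_const v).const_add x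
  have hd1 : ∀ t : ℝ, HasDerivAt (fun s => f (x + s • v)) (fderiv ℝ f (x + t • v) v) t := by
    intro t
    exact ((hf.differentiable (by norm_num)) (x + t • v)).hasFDerivAt.comp_hasDerivAt t (hline t)
  have hder1 : deriv (fun s => f (x + s • v)) = fun t => fderiv ℝ f (x + t • v) v :=
    funext fun t => (hd1 t).deriv
  rw [hder1]
  have hdiff : Differentiable ℝ (fderiv ℝ f) :=
    (hf.fderiv_right (m := 1) (by norm_num)).differentiable (by norm_num)
  have hfd : HasFDerivAt (fderiv ℝ f) (fderiv ℝ (fderiv ℝ f) x) (x + (0:ℝ) • v) := by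
    simpa using (hdiff x).hasFDerivAt
  have hcomp : HasDerivAt (fun t : ℝ => fderiv ℝ f (x + t • v))
      (fderiv ℝ (fderiv ℝ f) x v) 0 := hfd.comp_hasDerivAt 0 (hline 0)
  have happ : HasDerivAt (fun t : ℝ => fderiv ℝ f (x + t • v) v)
      (fderiv ℝ (fderiv ℝ f) x v v) 0 := by
    have := hcomp.clm_apply (hasDerivAt_const 0 v)
    simpa using this
  rw [happ.deriv, iteratedFDeriv_two_apply]
  simp

lemma deriv2_sqrt_quadratic (a₀ a₁ a₂ : ℝ) (h : 0 < a₀) :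
    deriv (deriv (fun t : ℝ => Real.sqrt (a₀ + a₁ * t + a₂ * t ^ 2))) 0
      = (4 * a₀ * a₂ - a₁ ^ 2) / (4 * a₀ * Real.sqrt a₀) := by
  have hq : ∀ t : ℝ, HasDerivAt (fun t : ℝ => a₀ + a₁ * t + a₂ * t ^ 2) (a₁ + 2 * a₂ * t) t := by
    intro t
    have h1 : HasDerivAt (fun t : ℝ => a₀ + a₁ * t + a₂ * t ^ 2)
        (0 + a₁ * 1 + a₂ * (↑2 * t ^ 1)) t :=
      ((hasDerivAt_const t a₀).add ((hasDerivAt_id t).const_mul a₁)).add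
        ((hasDerivAt_pow 2 t).const_mul a₂)
    convert h1 using 1; push_cast; ring
  have hcont : Continuous fun t : ℝ => a₀ + a₁ * t + a₂ * t ^ 2 := by continuity
  have hq0 : (fun t : ℝ => a₀ + a₁ * t + a₂ * t ^ 2) 0 = a₀ := by simp
  have hU : ∀ᶠ t in nhds (0:ℝ), 0 < a₀ + a₁ * t + a₂ * t ^ 2 := by
    have := (hcont.continuousAt (x := (0:ℝ))).eventually_const_lt (u := (0:ℝ)) (by simpa [hq0])
    simpa using this
  have hev : deriv (fun t : ℝ => Real.sqrt (a₀ + a₁ * t + a₂ * t ^ 2))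
      =ᶠ[nhds (0:ℝ)] fun t => (a₁ + 2 * a₂ * t) / (2 * Real.sqrt (a₀ + a₁ * t + a₂ * t ^ 2)) :=
    hU.mono fun t ht => ((hq t).sqrt ht.ne').deriv
  rw [hev.deriv_eq]
  have hs0 : Real.sqrt (a₀ + a₁ * 0 + a₂ * 0 ^ 2) = Real.sqrt a₀ := by norm_num
  have hspos : 0 < Real.sqrt a₀ := Real.sqrt_pos.mpr h
  have hnum : HasDerivAt (fun t : ℝ => a₁ + 2 * a₂ * t) (2 * a₂) 0 := by
    simpa using ((hasDerivAt_id (0:ℝ)).const_mul (2 * a₂)).const_add a₁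
  have hden : HasDerivAt (fun t : ℝ => 2 * Real.sqrt (a₀ + a₁ * t + a₂ * t ^ 2))
      (2 * ((a₁ + 2 * a₂ * 0) / (2 * Real.sqrt (a₀ + a₁ * 0 + a₂ * 0 ^ 2)))) 0 :=
    ((hq 0).sqrt (by norm_num; exact h.ne')).const_mul 2
  have hden0 : 2 * Real.sqrt (a₀ + a₁ * 0 + a₂ * 0 ^ 2) ≠ 0 := by
    rw [hs0]; positivity
  have hdiv : HasDerivAt (fun t : ℝ => (a₁ + 2 * a₂ * t) / (2 * Real.sqrt (a₀ + a₁ * t + a₂ * t ^ 2))) _ 0 :=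
    hnum.div hden hden0
  rw [hdiv.deriv]
  rw [hs0]
  have hsq : Real.sqrt a₀ * Real.sqrt a₀ = a₀ := Real.mul_self_sqrt h.le
  rw [← hsq]
  field_simp
  rw [Real.sqrt_sq hspos.le]
  ring

lemma det_line {k m : ℕ} (B : Matrix (Fin k) (Fin m) ℝ) (ξ : Fin k → ℝ) (η : Fin m → ℝ)
    (hdet : IsUnit ((1 : Matrix (Fin k) (Fin k) ℝ) + B * Bᵀ).det) (t : ℝ) :
    (1 + (B + t • vecMulVec ξ η) * (B + t • vecMulVec ξ η)ᵀ).det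
      = (1 + B * Bᵀ).det
        + ((1 + B * Bᵀ).det * (2 * (ξ ⬝ᵥ (1 + B * Bᵀ)⁻¹ *ᵥ (B *ᵥ η)))) * t
        + ((1 + B * Bᵀ).det *
            ((ξ ⬝ᵥ (1 + B * Bᵀ)⁻¹ *ᵥ (B *ᵥ η)) ^ 2
              + (η ⬝ᵥ η) * (ξ ⬝ᵥ (1 + B * Bᵀ)⁻¹ *ᵥ ξ)
              - (ξ ⬝ᵥ (1 + B * Bᵀ)⁻¹ *ᵥ ξ) * ((B *ᵥ η) ⬝ᵥ (1 + B * Bᵀ)⁻¹ *ᵥ (B *ᵥ η)))) * t ^ 2 := by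
  set G0 : Matrix (Fin k) (Fin k) ℝ := 1 + B * Bᵀ with hG0
  set W : Matrix (Fin k) (Fin k) ℝ := G0⁻¹ with hW
  set u : Fin k → ℝ := B *ᵥ η with hu
  set α : ℝ := ξ ⬝ᵥ W *ᵥ ξ with hα
  set β : ℝ := ξ ⬝ᵥ W *ᵥ u with hβ
  set γ : ℝ := u ⬝ᵥ W *ᵥ u with hγ
  set c : ℝ := η ⬝ᵥ η with hc
  have hGsym : G0ᵀ = G0 := by
    rw [hG0, transpose_add, transpose_one, transpose_mul, transpose_transpose]
  have hG0W : G0 * W = 1 := mul_nonsing_inv _ hdet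
  have hWsym : Wᵀ = W := by rw [hW, transpose_nonsing_inv, hGsym]
  set C : Matrix (Fin k) (Fin 2) ℝ := Matrix.of (fun i w => ![ξ i, u i] w) with hC
  set R : Matrix (Fin 2) (Fin k) ℝ :=
    Matrix.of (fun w j => ![t * u j + t ^ 2 * c * ξ j, t * ξ j] w) with hR
  have step1 : 1 + (B + t • vecMulVec ξ η) * (B + t • vecMulVec ξ η)ᵀ = G0 + C * R := by
    ext i j
    simp only [Matrix.add_apply, Matrix.mul_apply, Matrix.transpose_apply, hG0,
      Matrix.smul_apply, vecMulVec_apply, smul_eq_mul, hC, hR, Matrix.of_apply,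
      Fin.sum_univ_two, Matrix.cons_val_zero, Matrix.cons_val_one, Matrix.head_cons]
    have expand : ∀ a, (B i a + t * (ξ i * η a)) * (B j a + t * (ξ j * η a))
        = B i a * B j a + (t * ξ i) * (B j a * η a) + (t * ξ j) * (B i a * η a)
          + (t ^ 2 * (ξ i * ξ j)) * (η a * η a) := fun a => by ring
    rw [Finset.sum_congr rfl fun a _ => expand a]
    simp only [Finset.sum_add_distrib, ← Finset.mul_sum]
    have hui : u i = ∑ a, B i a * η a := rfl
    have huj : u j = ∑ a, B j a * η a := rfl
    have hcc : c = ∑ a, η a * η a := rfl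
    rw [hui, huj, hcc]
    ring
  have step2 : G0 + C * R = G0 * (1 + W * (C * R)) := by
    rw [mul_add, mul_one, ← Matrix.mul_assoc, hG0W, one_mul]
  have step3 : (1 + (B + t • vecMulVec ξ η) * (B + t • vecMulVec ξ η)ᵀ).det
      = G0.det * (1 + R * (W * C)).det := by
    rw [step1, step2, det_mul]
    congr 1
    rw [← Matrix.mul_assoc]
    exact det_one_add_mul_comm (W * C) R
  have hNE : ∀ w w', (R * (W * C)) w w'
      = (fun j => R w j) ⬝ᵥ (W *ᵥ (fun l => C l w')) := by
    intro w w'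
    simp only [Matrix.mul_apply, mulVec, dotProduct]
  have hCcol0 : (fun l => C l (0 : Fin 2)) = ξ := by funext l; simp [hC]
  have hCcol1 : (fun l => C l (1 : Fin 2)) = u := by funext l; simp [hC]
  have hRrow0 : (fun j => R (0 : Fin 2) j) = t • u + (t ^ 2 * c) • ξ := by
    funext j; simp [hR, smul_eq_mul]
  have hRrow1 : (fun j => R (1 : Fin 2) j) = t • ξ := by funext j; simp [hR]
  have hswap : u ⬝ᵥ W *ᵥ ξ = β := by rw [hβ]; exact dot_swap W hWsym u ξ
  have hN00 : (R * (W * C)) 0 0 = t * β + t ^ 2 * c * α := by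
    rw [hNE, hCcol0, hRrow0, add_dotProduct, smul_dotProduct, smul_dotProduct,
      smul_eq_mul, smul_eq_mul, hswap, hα]
  have hN01 : (R * (W * C)) 0 1 = t * γ + t ^ 2 * c * β := by
    rw [hNE, hCcol1, hRrow0, add_dotProduct, smul_dotProduct, smul_dotProduct,
      smul_eq_mul, smul_eq_mul, hγ, hβ]
  have hN10 : (R * (W * C)) 1 0 = t * α := by
    rw [hNE, hCcol0, hRrow1, smul_dotProduct, smul_eq_mul, hα]
  have hN11 : (R * (W * C)) 1 1 = t * β := by
    rw [hNE, hCcol1, hRrow1, smul_dotProduct, smul_eq_mul, hβ]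
  have step4 : (1 + R * (W * C)).det
      = 1 + 2 * β * t + (β ^ 2 + c * α - α * γ) * t ^ 2 := by
    rw [det_fin_two]
    simp only [Matrix.add_apply, hN00, hN01, hN10, hN11]
    norm_num [Matrix.one_apply]
    ring
  rw [step3, step4]
  ring

end Stmt15Aux

/-- Legendre–Hadamard inequality (rank-one convexity with explicit modulus) for the area
integrand `F(P) = √(det(I + PPᵀ))`: for every `P`, `ξ`, `η`, the second derivative of `F`
at `P` in the rank-one direction `ξ ⊗ η` is bounded below by
`√(g(P)) / (1 + ‖P‖_F²)² · |ξ|² |η|²`. -/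
theorem stmt15 (k m : ℕ) (P : Fin k → Fin m → ℝ) (ξ : Fin k → ℝ) (η : Fin m → ℝ) :
    Real.sqrt ((1 + Matrix.of P * (Matrix.of P)ᵀ).det)
        / (1 + ∑ i, ∑ a, (P i a) ^ 2) ^ 2 * ((∑ i, (ξ i) ^ 2) * (∑ a, (η a) ^ 2))
      ≤ iteratedFDeriv ℝ 2
          (fun Q : Fin k → Fin m → ℝ => Real.sqrt ((1 + Matrix.of Q * (Matrix.of Q)ᵀ).det))
          P ![fun i a => ξ i * η a, fun i a => ξ i * η a] := by
  classical
  set B : Matrix (Fin k) (Fin m) ℝ := Matrix.of P with hB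
  set G0 : Matrix (Fin k) (Fin k) ℝ := 1 + B * Bᵀ with hG0
  have hPD : G0.PosDef := Stmt15Aux.posdef_G B
  have hg : 0 < G0.det := hPD.det_pos
  have hunit : IsUnit G0.det := hg.ne'.isUnit
  set W : Matrix (Fin k) (Fin k) ℝ := G0⁻¹ with hW
  set u : Fin k → ℝ := B *ᵥ η with hu
  set α : ℝ := ξ ⬝ᵥ W *ᵥ ξ with hα
  set β : ℝ := ξ ⬝ᵥ W *ᵥ u with hβ
  set γ : ℝ := u ⬝ᵥ W *ᵥ u with hγ
  set c : ℝ := η ⬝ᵥ η with hc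
  set g : ℝ := G0.det with hgdef
  set s : ℝ := ∑ i, ∑ a, (P i a) ^ 2 with hs
  set F : (Fin k → Fin m → ℝ) → ℝ :=
    fun Q : Fin k → Fin m → ℝ => Real.sqrt ((1 + Matrix.of Q * (Matrix.of Q)ᵀ).det) with hF
  have hFc : ContDiff ℝ 2 F :=
    (Stmt15Aux.contDiff_detpart k m).sqrt fun Q => (Stmt15Aux.posdef_G (Matrix.of Q)).det_pos.ne'
  set X : Fin k → Fin m → ℝ := fun i a => ξ i * η a with hX
  have h2 : iteratedFDeriv ℝ 2 F P ![X, X] = deriv (deriv (fun t : ℝ => F (P + t • X))) 0 :=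
    Stmt15Aux.second_line F hFc P X
  have hofX : ∀ t : ℝ, Matrix.of (P + t • X) = B + t • vecMulVec ξ η := fun t => rfl
  have hφ : (fun t : ℝ => F (P + t • X))
      = fun t : ℝ => Real.sqrt (g + (g * (2 * β)) * t
          + (g * (β ^ 2 + c * α - α * γ)) * t ^ 2) := by
    funext t
    show Real.sqrt ((1 + Matrix.of (P + t • X) * (Matrix.of (P + t • X))ᵀ).det) = _
    rw [hofX, Stmt15Aux.det_line B ξ η hunit t]
  have hg2 := Stmt15Aux.deriv2_sqrt_quadratic g (g * (2 * β)) (g * (β ^ 2 + c * α - α * γ)) hg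
  rw [h2, hφ, hg2]
  -- close the value into √g * (α * (c - γ))
  have hsq : Real.sqrt g * Real.sqrt g = g := Real.mul_self_sqrt hg.le
  have hspos : 0 < Real.sqrt g := Real.sqrt_pos.mpr hg
  have hval : (4 * g * (g * (β ^ 2 + c * α - α * γ)) - (g * (2 * β)) ^ 2)
      / (4 * g * Real.sqrt g) = Real.sqrt g * (α * (c - γ)) := by
    have hpos : (0:ℝ) < 4 * g * Real.sqrt g := by nlinarith [hg, hspos]
    rw [div_eq_iff hpos.ne']
    linear_combination (-(4 * g * (α * (c - γ)))) * hsq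
  rw [hval]
  -- inequalities
  have hs0 : 0 ≤ s := Finset.sum_nonneg fun i _ => Finset.sum_nonneg fun a _ => sq_nonneg _
  have hsp : 0 < 1 + s := by linarith
  have hGsym : G0ᵀ = G0 := Stmt15Aux.sym_G B
  have hG0W : G0 * W = 1 := mul_nonsing_inv _ hunit
  have hWsym : Wᵀ = W := by rw [hW, transpose_nonsing_inv, hGsym]
  have hpsd : ∀ y, 0 ≤ y ⬝ᵥ G0 *ᵥ y := fun y => Stmt15Aux.psd_G B y
  have hBP : (∑ i, ∑ a, B i a ^ 2) = s := rfl
  have hupξ : ξ ⬝ᵥ G0 *ᵥ ξ ≤ (1 + s) * (ξ ⬝ᵥ ξ) := by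
    have := Stmt15Aux.upper_G B ξ; rw [hBP] at this; exact this
  have hb1 : (ξ ⬝ᵥ ξ) / (1 + s) ≤ α := Stmt15Aux.key_bound G0 W ξ (1 + s) hGsym hG0W hpsd hupξ hsp
  -- second bound
  set H0 : Matrix (Fin m) (Fin m) ℝ := 1 + Bᵀ * B with hH0
  set K0 : Matrix (Fin m) (Fin m) ℝ := 1 - Bᵀ * (W * B) with hK0
  have hH0form : H0 = 1 + Bᵀ * (Bᵀ)ᵀ := by rw [hH0, transpose_transpose]
  have hH0sym : H0ᵀ = H0 := by rw [hH0form]; exact Stmt15Aux.sym_G Bᵀ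
  have hpsdH : ∀ y, 0 ≤ y ⬝ᵥ H0 *ᵥ y := fun y => by rw [hH0form]; exact Stmt15Aux.psd_G Bᵀ y
  have hupη : η ⬝ᵥ H0 *ᵥ η ≤ (1 + s) * (η ⬝ᵥ η) := by
    have h := Stmt15Aux.upper_G Bᵀ η
    rw [← hH0form] at h
    have hsum : (∑ a, ∑ i, (Bᵀ) a i ^ 2) = s := by
      rw [Finset.sum_comm]; rfl
    rw [hsum] at h; exact h
  have hkey : Bᵀ * (W * B) + Bᵀ * (B * (Bᵀ * (W * B))) = Bᵀ * B := by
    have h1 : G0 * (W * B) = B := by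
      rw [← Matrix.mul_assoc, hG0W, Matrix.one_mul]
    calc Bᵀ * (W * B) + Bᵀ * (B * (Bᵀ * (W * B)))
        = Bᵀ * ((1 + B * Bᵀ) * (W * B)) := by
          rw [Matrix.add_mul, Matrix.one_mul, Matrix.mul_assoc, Matrix.mul_add]
      _ = Bᵀ * B := by rw [← hG0, h1]
  have hHK : H0 * K0 = 1 := by
    calc H0 * K0
        = (1 + Bᵀ * B) - (1 * (Bᵀ * (W * B)) + Bᵀ * B * (Bᵀ * (W * B))) := by
          rw [hH0, hK0, Matrix.mul_sub, Matrix.mul_one, Matrix.add_mul]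
      _ = (1 + Bᵀ * B) - (Bᵀ * (W * B) + Bᵀ * (B * (Bᵀ * (W * B)))) := by
          rw [Matrix.one_mul, Matrix.mul_assoc]
      _ = (1 + Bᵀ * B) - Bᵀ * B := by rw [hkey]
      _ = 1 := add_sub_cancel_right 1 (Bᵀ * B)
  have hγ' : η ⬝ᵥ (Bᵀ * (W * B)) *ᵥ η = γ := by
    rw [hγ, hu, ← mulVec_mulVec, ← mulVec_mulVec]
    exact (Stmt15Aux.dot_shift B η (W *ᵥ (B *ᵥ η))).symm
  have hηK0 : η ⬝ᵥ K0 *ᵥ η = c - γ := by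
    rw [hK0, sub_mulVec, one_mulVec, dotProduct_sub, hγ', hc]
  have hb2 : (η ⬝ᵥ η) / (1 + s) ≤ c - γ := by
    rw [← hηK0]
    exact Stmt15Aux.key_bound H0 K0 η (1 + s) hH0sym hHK hpsdH hupη hsp
  -- finish
  have hξ0 : 0 ≤ ξ ⬝ᵥ ξ := Finset.sum_nonneg fun i _ => mul_self_nonneg _
  have hη0 : 0 ≤ η ⬝ᵥ η := Finset.sum_nonneg fun a _ => mul_self_nonneg _
  have hα0 : 0 ≤ α := le_trans (div_nonneg hξ0 hsp.le) hb1
  have hmul : (ξ ⬝ᵥ ξ) / (1 + s) * ((η ⬝ᵥ η) / (1 + s)) ≤ α * (c - γ) :=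
    mul_le_mul hb1 hb2 (div_nonneg hη0 hsp.le) hα0
  have hSξ : (∑ i, (ξ i) ^ 2) = ξ ⬝ᵥ ξ := Finset.sum_congr rfl fun i _ => pow_two (ξ i)
  have hSη : (∑ a, (η a) ^ 2) = η ⬝ᵥ η := Finset.sum_congr rfl fun a _ => pow_two (η a)
  have hrw : Real.sqrt g / (1 + s) ^ 2 * ((∑ i, (ξ i) ^ 2) * (∑ a, (η a) ^ 2))
      = Real.sqrt g * ((ξ ⬝ᵥ ξ) / (1 + s) * ((η ⬝ᵥ η) / (1 + s))) := by
    rw [hSξ, hSη, div_mul_eq_mul_div, mul_div_assoc, div_mul_div_comm, ← pow_two]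
  rw [hrw]
  exact mul_le_mul_of_nonneg_left hmul (Real.sqrt_nonneg g)
end

section
/- Let Ω ⊆ ℝ^k be open and bounded, and suppose f : Ω → ℝ^{n-k} is C¹ with ‖∇f‖_∞ = L and that the varifold V = |graph f| has locally bounded first variation with generalized mean curvature h ∈ L²(‖V‖). Then f is a weak solution of the system ∑_{i,j} ∂_i(√g g^{ij} ∂_j f^a) = √g h^a(· + f(·)) for a = k+1,…,n, i.e., for every φ ∈ C_c^1(Ω): ∫_Ω √g g^{ij} ∂_j f^a ∂_i φ dx = -∫_Ω √g h^a(x + f(x)) φ(x) dx, where g_{ij} = δ_{ij} + ∂_i f·∂_j f, (g^{ij}) = (g_{ij})^{-1}, g = det(g_{ij}). -/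
open MeasureTheory
open scoped RealInnerProductSpace

open scoped Matrix
set_option synthInstance.maxHeartbeats 1000000
set_option maxHeartbeats 1600000

lemma trace_smulRight_aux {W : Type*} [AddCommGroup W] [Module ℝ W]
    [Module.Finite ℝ W] [Module.Free ℝ W]
    (l : W →ₗ[ℝ] ℝ) (v : W) :
    LinearMap.trace ℝ W (l.smulRight v) = l v := by
  have h1 : l.smulRight v = (LinearMap.toSpanSingleton ℝ W v) ∘ₗ l := by
    ext w; simp [LinearMap.toSpanSingleton_apply]
  have h2 : l ∘ₗ LinearMap.toSpanSingleton ℝ W v = (l v) • LinearMap.id := by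
    ext r; simp [LinearMap.toSpanSingleton_apply, mul_comm]
  rw [h1, LinearMap.trace_comp_comm', h2, _root_.map_smul, LinearMap.trace_id]
  simp

lemma proj_formula {k m : ℕ} (D : EuclideanSpace ℝ (Fin k) →L[ℝ] EuclideanSpace ℝ (Fin m))
    (b : Fin m) (G : Matrix (Fin k) (Fin k) ℝ)
    (hG : ∀ i j, G i j = (if i = j then (1:ℝ) else 0)
        + ∑ a, D (EuclideanSpace.single i 1) a * D (EuclideanSpace.single j 1) a)
    (u : EuclideanSpace ℝ (Fin k))
    (hu : ∀ i, u i = ∑ j, G⁻¹ i j * D (EuclideanSpace.single j 1) b) :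
    (Submodule.orthogonalProjectionOnto (LinearMap.range ((WithLp.linearEquiv 2 ℝ
          (EuclideanSpace ℝ (Fin k) × EuclideanSpace ℝ (Fin m))).symm.toLinearMap ∘ₗ
        LinearMap.prod LinearMap.id
          (D : EuclideanSpace ℝ (Fin k) →ₗ[ℝ] EuclideanSpace ℝ (Fin m))))
      ((WithLp.equiv 2 (EuclideanSpace ℝ (Fin k) × EuclideanSpace ℝ (Fin m))).symm
        (0, EuclideanSpace.single b 1))
      : WithLp 2 (EuclideanSpace ℝ (Fin k) × EuclideanSpace ℝ (Fin m)))
      = (WithLp.equiv 2 (EuclideanSpace ℝ (Fin k) × EuclideanSpace ℝ (Fin m))).symm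
        (u, D u) := by
  classical
  set p : Fin k → ℝ := fun j => D (EuclideanSpace.single j 1) b with hp
  have hpd : G.PosDef := by
    have hGeq : G = 1 + (Matrix.of fun c i => D (EuclideanSpace.single i 1) c).conjTranspose
        * (Matrix.of fun c i => D (EuclideanSpace.single i 1) c) := by
      ext i j
      simp [hG, Matrix.mul_apply, Matrix.one_apply, Matrix.conjTranspose_apply]
    rw [hGeq]
    exact Matrix.PosDef.add_posSemidef Matrix.PosDef.one
      (Matrix.posSemidef_conjTranspose_mul_self _)
  have hdet : IsUnit G.det := hpd.det_pos.ne'.isUnit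
  have hu' : (fun i => u i) = G⁻¹ *ᵥ p := by
    funext i; rw [hu]; simp [Matrix.mulVec, dotProduct, hp]
  have hGu : G *ᵥ (fun i => u i) = p := by
    rw [hu', Matrix.mulVec_mulVec, Matrix.mul_nonsing_inv _ hdet, Matrix.one_mulVec]
  have key : ∀ j, p j = u j + ∑ i, u i
      * ∑ c, D (EuclideanSpace.single i 1) c * D (EuclideanSpace.single j 1) c := by
    intro j
    have h1 := congrFun hGu j
    have h0 : (G *ᵥ (fun i => u i)) j = ∑ i, G j i * u i := by
      simp [Matrix.mulVec, dotProduct]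
    rw [h0] at h1
    have h2 : ∀ i, G j i * u i = (if j = i then u i else 0) + u i
        * ∑ c, D (EuclideanSpace.single i 1) c * D (EuclideanSpace.single j 1) c := by
      intro i
      rw [hG j i,
        Finset.sum_congr rfl (fun c _ => mul_comm (D (EuclideanSpace.single j 1) c)
          (D (EuclideanSpace.single i 1) c))]
      split <;> ring
    rw [← h1, Finset.sum_congr rfl fun i _ => h2 i, Finset.sum_add_distrib]
    simp
  have hDa : ∀ a : EuclideanSpace ℝ (Fin k),
      D a = ∑ j, a j • D (EuclideanSpace.single j 1) := by
    intro a
    conv_lhs => rw [← (EuclideanSpace.basisFun (Fin k) ℝ).sum_repr a]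
    simp [EuclideanSpace.basisFun_repr]
  rw [← Submodule.starProjection_apply]
  apply Submodule.eq_starProjection_of_mem_of_inner_eq_zero
  · exact ⟨u, rfl⟩
  · rintro t ⟨a, rfl⟩
    rw [inner_sub_left]
    have e1 : ⟪((WithLp.equiv 2 (EuclideanSpace ℝ (Fin k) × EuclideanSpace ℝ (Fin m))).symm
        (0, EuclideanSpace.single b 1) : WithLp 2 _),
        ((WithLp.linearEquiv 2 ℝ (EuclideanSpace ℝ (Fin k) × EuclideanSpace ℝ (Fin m))).symm.toLinearMap ∘ₗ
          LinearMap.prod LinearMap.id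
            (D : EuclideanSpace ℝ (Fin k) →ₗ[ℝ] EuclideanSpace ℝ (Fin m))) a⟫
        = ⟪(EuclideanSpace.single b 1 : EuclideanSpace ℝ (Fin m)), D a⟫ := by
      simp [WithLp.prod_inner_apply]
    have e2 : ⟪((WithLp.equiv 2 (EuclideanSpace ℝ (Fin k) × EuclideanSpace ℝ (Fin m))).symm
        (u, D u) : WithLp 2 _),
        ((WithLp.linearEquiv 2 ℝ (EuclideanSpace ℝ (Fin k) × EuclideanSpace ℝ (Fin m))).symm.toLinearMap ∘ₗ
          LinearMap.prod LinearMap.id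
            (D : EuclideanSpace ℝ (Fin k) →ₗ[ℝ] EuclideanSpace ℝ (Fin m))) a⟫
        = ⟪u, a⟫ + ⟪D u, D a⟫ := by
      simp [WithLp.prod_inner_apply]
    rw [e1, e2]
    have e3 : ⟪(EuclideanSpace.single b 1 : EuclideanSpace ℝ (Fin m)), D a⟫
        = ∑ j, a j * p j := by
      rw [hDa a, inner_sum]
      simp [real_inner_smul_right, EuclideanSpace.inner_single_left, hp]
    have e4 : ⟪u, a⟫ = ∑ i, u i * a i := by
      simp [PiLp.inner_apply, RCLike.inner_apply, mul_comm]
    have e5 : ⟪D u, D a⟫ = ∑ j, a j * ∑ i, u i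
        * ∑ c, D (EuclideanSpace.single i 1) c * D (EuclideanSpace.single j 1) c := by
      rw [hDa a, hDa u, inner_sum]
      refine Finset.sum_congr rfl fun j _ => ?_
      rw [real_inner_smul_right, sum_inner]
      congr 1
      refine Finset.sum_congr rfl fun i _ => ?_
      rw [real_inner_smul_left, PiLp.inner_apply]
      simp [RCLike.inner_apply, mul_comm]
    rw [e3, e4, e5]
    have : ∀ j, a j * p j = u j * a j + a j * ∑ i, u i
        * ∑ c, D (EuclideanSpace.single i 1) c * D (EuclideanSpace.single j 1) c := by
      intro j; rw [key j]; ring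
    rw [Finset.sum_congr rfl fun j _ => this j, Finset.sum_add_distrib]
    ring

lemma graph_posDef {k m : ℕ} (D : EuclideanSpace ℝ (Fin k) →L[ℝ] EuclideanSpace ℝ (Fin m)) :
    (Matrix.of fun i j => (if i = j then (1:ℝ) else 0)
      + ∑ a, D (EuclideanSpace.single i 1) a * D (EuclideanSpace.single j 1) a).PosDef := by
  have hGeq : (Matrix.of fun i j => (if i = j then (1:ℝ) else 0)
      + ∑ a, D (EuclideanSpace.single i 1) a * D (EuclideanSpace.single j 1) a)
      = 1 + (Matrix.of fun c i => D (EuclideanSpace.single i 1) c).conjTranspose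
        * (Matrix.of fun c i => D (EuclideanSpace.single i 1) c) := by
    ext i j
    simp [Matrix.mul_apply, Matrix.one_apply, Matrix.conjTranspose_apply]
  rw [hGeq]
  exact Matrix.PosDef.add_posSemidef Matrix.PosDef.one
    (Matrix.posSemidef_conjTranspose_mul_self _)

/-- If `f : Ω → ℝ^m` is `C¹` with `‖∇f‖_∞ ≤ L` on a bounded open set `Ω ⊆ ℝ^k`, and the
unit-density varifold `V = |graph f|` has generalized mean curvature `h ∈ L²(‖V‖)`
(i.e. the first variation identity `δV(X) = -∫ X·h d‖V‖` holds, written in graph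
coordinates via the area formula), then `f` is a weak solution of the prescribed mean
curvature system `∑ ∂_i(√g gⁱʲ ∂_j f^a) = √g h^a(· + f(·))`. -/
theorem stmt18 (k m : ℕ) (L : ℝ)
    (Ω : Set (EuclideanSpace ℝ (Fin k))) (hΩ : IsOpen Ω)
    (hΩbdd : Bornology.IsBounded Ω)
    (f : EuclideanSpace ℝ (Fin k) → EuclideanSpace ℝ (Fin m))
    (hf : ContDiff ℝ 1 f) (hfL : ∀ x ∈ Ω, ‖fderiv ℝ f x‖ ≤ L)
    (ι : EuclideanSpace ℝ (Fin k) →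
      WithLp 2 (EuclideanSpace ℝ (Fin k) × EuclideanSpace ℝ (Fin m)))
    (hι : ∀ x, ι x = (WithLp.equiv 2
      (EuclideanSpace ℝ (Fin k) × EuclideanSpace ℝ (Fin m))).symm (x, f x))
    (sg : EuclideanSpace ℝ (Fin k) → ℝ)
    (hsg : ∀ x, sg x = Real.sqrt (Matrix.det (Matrix.of fun i j =>
      (if i = j then (1 : ℝ) else 0)
        + ∑ a, fderiv ℝ f x (EuclideanSpace.single i 1) a
            * fderiv ℝ f x (EuclideanSpace.single j 1) a)))
    (ginv : EuclideanSpace ℝ (Fin k) → Matrix (Fin k) (Fin k) ℝ)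
    (hginv : ∀ x, ginv x = (Matrix.of fun i j =>
      (if i = j then (1 : ℝ) else 0)
        + ∑ a, fderiv ℝ f x (EuclideanSpace.single i 1) a
            * fderiv ℝ f x (EuclideanSpace.single j 1) a)⁻¹)
    -- the orthogonal projection onto the tangent plane of the graph at `ι x`
    (tproj : EuclideanSpace ℝ (Fin k) →
      (WithLp 2 (EuclideanSpace ℝ (Fin k) × EuclideanSpace ℝ (Fin m)) →L[ℝ]
        WithLp 2 (EuclideanSpace ℝ (Fin k) × EuclideanSpace ℝ (Fin m))))
    (htproj : ∀ x, tproj x =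
      (LinearMap.range ((WithLp.linearEquiv 2 ℝ
          (EuclideanSpace ℝ (Fin k) × EuclideanSpace ℝ (Fin m))).symm.toLinearMap ∘ₗ
        LinearMap.prod LinearMap.id
          ((fderiv ℝ f x : EuclideanSpace ℝ (Fin k) →L[ℝ] EuclideanSpace ℝ (Fin m))
            : EuclideanSpace ℝ (Fin k) →ₗ[ℝ] EuclideanSpace ℝ (Fin m)))).subtypeL
      ∘L Submodule.orthogonalProjectionOnto (LinearMap.range ((WithLp.linearEquiv 2 ℝ
          (EuclideanSpace ℝ (Fin k) × EuclideanSpace ℝ (Fin m))).symm.toLinearMap ∘ₗ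
        LinearMap.prod LinearMap.id
          ((fderiv ℝ f x : EuclideanSpace ℝ (Fin k) →L[ℝ] EuclideanSpace ℝ (Fin m))
            : EuclideanSpace ℝ (Fin k) →ₗ[ℝ] EuclideanSpace ℝ (Fin m)))))
    -- the generalized mean curvature, square integrable with respect to `‖V‖`
    (h : WithLp 2 (EuclideanSpace ℝ (Fin k) × EuclideanSpace ℝ (Fin m)) →
      WithLp 2 (EuclideanSpace ℝ (Fin k) × EuclideanSpace ℝ (Fin m)))
    (hL2 : IntegrableOn (fun x => ‖h (ι x)‖ ^ 2 * sg x) Ω volume)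
    -- the first variation identity `δV(X) = -∫ X·h d‖V‖`, in graph coordinates
    (hfv : ∀ X : WithLp 2 (EuclideanSpace ℝ (Fin k) × EuclideanSpace ℝ (Fin m)) →
        WithLp 2 (EuclideanSpace ℝ (Fin k) × EuclideanSpace ℝ (Fin m)),
      ContDiff ℝ 1 X → HasCompactSupport X →
      tsupport X ⊆ {z | (WithLp.equiv 2
        (EuclideanSpace ℝ (Fin k) × EuclideanSpace ℝ (Fin m)) z).1 ∈ Ω} →
      ∫ x in Ω, (LinearMap.trace ℝ _)
          (((tproj x) ∘L (fderiv ℝ X (ι x)))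
            : WithLp 2 (EuclideanSpace ℝ (Fin k) × EuclideanSpace ℝ (Fin m)) →ₗ[ℝ]
              WithLp 2 (EuclideanSpace ℝ (Fin k) × EuclideanSpace ℝ (Fin m))) * sg x
        = -∫ x in Ω, ⟪X (ι x), h (ι x)⟫ * sg x) :
    -- conclusion: weak form of the prescribed mean curvature system
    ∀ φ : EuclideanSpace ℝ (Fin k) → ℝ, ContDiff ℝ 1 φ → HasCompactSupport φ →
      tsupport φ ⊆ Ω → ∀ b : Fin m,
      ∑ i, ∑ j, ∫ x in Ω, sg x * ginv x i j
          * fderiv ℝ f x (EuclideanSpace.single j 1) b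
          * fderiv ℝ φ x (EuclideanSpace.single i 1)
        = -∫ x in Ω, sg x * ((WithLp.equiv 2
            (EuclideanSpace ℝ (Fin k) × EuclideanSpace ℝ (Fin m)) (h (ι x))).2 b)
          * φ x := by
    classical
  intro φ hφ hφc hφΩ b
  have hcf : Continuous f := hf.continuous
  have hK : IsCompact (tsupport φ) := hφc
  obtain ⟨R, hR0, hRsub⟩ := ((hK.image hcf).isBounded.subset_ball_lt 0 0)
  set χ : ContDiffBump (0 : EuclideanSpace ℝ (Fin m)) := ⟨R, 2*R, hR0, by linarith⟩
    with hχdef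
  set π₁ : WithLp 2 (EuclideanSpace ℝ (Fin k) × EuclideanSpace ℝ (Fin m)) →L[ℝ]
      EuclideanSpace ℝ (Fin k) :=
    (ContinuousLinearMap.fst ℝ (EuclideanSpace ℝ (Fin k)) (EuclideanSpace ℝ (Fin m))).comp
      ((WithLp.prodContinuousLinearEquiv 2 ℝ (EuclideanSpace ℝ (Fin k))
        (EuclideanSpace ℝ (Fin m))) : _ →L[ℝ] _) with hπ₁def
  set π₂ : WithLp 2 (EuclideanSpace ℝ (Fin k) × EuclideanSpace ℝ (Fin m)) →L[ℝ]
      EuclideanSpace ℝ (Fin m) :=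
    (ContinuousLinearMap.snd ℝ (EuclideanSpace ℝ (Fin k)) (EuclideanSpace ℝ (Fin m))).comp
      ((WithLp.prodContinuousLinearEquiv 2 ℝ (EuclideanSpace ℝ (Fin k))
        (EuclideanSpace ℝ (Fin m))) : _ →L[ℝ] _) with hπ₂def
  set v : WithLp 2 (EuclideanSpace ℝ (Fin k) × EuclideanSpace ℝ (Fin m)) :=
    (WithLp.equiv 2 (EuclideanSpace ℝ (Fin k) × EuclideanSpace ℝ (Fin m))).symm
      (0, EuclideanSpace.single b 1) with hvdef
  set X : WithLp 2 (EuclideanSpace ℝ (Fin k) × EuclideanSpace ℝ (Fin m)) →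
      WithLp 2 (EuclideanSpace ℝ (Fin k) × EuclideanSpace ℝ (Fin m)) :=
    fun z => (φ (π₁ z) * χ (π₂ z)) • v with hXdef
  have hπ₁ι : ∀ x, π₁ (ι x) = x := fun x => by rw [hι]; rfl
  have hπ₂ι : ∀ x, π₂ (ι x) = f x := fun x => by rw [hι]; rfl
  -- regularity of X
  have hXcd : ContDiff ℝ 1 X :=
    ((hφ.comp π₁.contDiff).mul (χ.contDiff.comp π₂.contDiff)).smul contDiff_const
  -- support of X
  set S : Set (WithLp 2 (EuclideanSpace ℝ (Fin k) × EuclideanSpace ℝ (Fin m))) :=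
    (WithLp.prodContinuousLinearEquiv 2 ℝ (EuclideanSpace ℝ (Fin k))
      (EuclideanSpace ℝ (Fin m))).symm '' (tsupport φ ×ˢ Metric.closedBall 0 (2*R))
    with hSdef
  have hScomp : IsCompact S :=
    (hK.prod (isCompact_closedBall _ _)).image
      (WithLp.prodContinuousLinearEquiv 2 ℝ _ _).symm.continuous
  have hsupp : Function.support X ⊆ S := by
    intro z hz
    have hz' : φ (π₁ z) * χ (π₂ z) ≠ 0 := by
      intro h0; apply hz; rw [hXdef]; simp only [h0, zero_smul]
    have h1 : π₁ z ∈ tsupport φ :=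
      subset_tsupport φ (fun h0 => hz' (by rw [h0, zero_mul]))
    have h2 : π₂ z ∈ Metric.closedBall (0 : EuclideanSpace ℝ (Fin m)) (2*R) := by
      have : π₂ z ∈ Function.support χ := fun h0 => hz' (by rw [h0, mul_zero])
      rw [χ.support_eq] at this
      exact Metric.ball_subset_closedBall this
    exact ⟨(π₁ z, π₂ z), ⟨h1, h2⟩, rfl⟩
  have hXcs : HasCompactSupport X :=
    HasCompactSupport.intro hScomp fun z hz => by
      by_contra h0; exact hz (hsupp h0)
  have hXΩ : tsupport X ⊆ {z | (WithLp.equiv 2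
      (EuclideanSpace ℝ (Fin k) × EuclideanSpace ℝ (Fin m)) z).1 ∈ Ω} := by
    refine (closure_minimal hsupp hScomp.isClosed).trans ?_
    rintro z ⟨⟨az, cz⟩, ⟨haz, _⟩, rfl⟩
    exact hφΩ haz
  -- the derivative of X along the graph
  have hDX : ∀ x, fderiv ℝ X (ι x) = ((fderiv ℝ φ x).comp π₁).smulRight v := by
    intro x
    by_cases hx : x ∈ tsupport φ
    · have hfx : f x ∈ Metric.ball (0 : EuclideanSpace ℝ (Fin m)) R :=
        hRsub ⟨x, hx, rfl⟩
      have hEv : X =ᶠ[nhds (ι x)] fun z => φ (π₁ z) • v := by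
        have hUopen : IsOpen (π₂ ⁻¹' Metric.ball (0 : EuclideanSpace ℝ (Fin m)) R) :=
          Metric.isOpen_ball.preimage π₂.continuous
        have hmem : ι x ∈ π₂ ⁻¹' Metric.ball 0 R := by
          rw [Set.mem_preimage, hπ₂ι]; exact hfx
        filter_upwards [hUopen.mem_nhds hmem] with z hz
        have h1 : (χ (π₂ z) : ℝ) = 1 :=
          χ.one_of_mem_closedBall (Metric.ball_subset_closedBall hz)
        rw [hXdef]; simp only [h1, mul_one]
      rw [hEv.fderiv_eq]
      have h2 : HasFDerivAt φ (fderiv ℝ φ x) (π₁ (ι x)) := by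
        rw [hπ₁ι x]; exact (hφ.differentiable one_ne_zero x).hasFDerivAt
      exact ((h2.comp (ι x) π₁.hasFDerivAt).smul_const v).fderiv
    · have hEv : X =ᶠ[nhds (ι x)] fun _ => (0 : WithLp 2
          (EuclideanSpace ℝ (Fin k) × EuclideanSpace ℝ (Fin m))) := by
        have hUopen : IsOpen (π₁ ⁻¹' (tsupport φ)ᶜ) :=
          (isClosed_tsupport φ).isOpen_compl.preimage π₁.continuous
        have hmem : ι x ∈ π₁ ⁻¹' (tsupport φ)ᶜ := by
          rw [Set.mem_preimage, hπ₁ι]; exact hx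
        filter_upwards [hUopen.mem_nhds hmem] with z hz
        rw [hXdef]
        simp only [image_eq_zero_of_notMem_tsupport hz, zero_mul, zero_smul]
      have hφEv : φ =ᶠ[nhds x] fun _ => (0 : ℝ) := by
        filter_upwards [(isClosed_tsupport φ).isOpen_compl.mem_nhds hx] with y hy
        exact image_eq_zero_of_notMem_tsupport hy
      rw [hEv.fderiv_eq, hφEv.fderiv_eq]
      ext z
      simp
  -- trace computation
  have htr : ∀ x, (LinearMap.trace ℝ
        (WithLp 2 (EuclideanSpace ℝ (Fin k) × EuclideanSpace ℝ (Fin m))))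
      (((tproj x) ∘L (fderiv ℝ X (ι x)))
        : WithLp 2 (EuclideanSpace ℝ (Fin k) × EuclideanSpace ℝ (Fin m)) →ₗ[ℝ]
          WithLp 2 (EuclideanSpace ℝ (Fin k) × EuclideanSpace ℝ (Fin m)))
      = fderiv ℝ φ x (π₁ ((tproj x) v)) := by
    intro x
    rw [hDX x]
    have hcomp : (tproj x) ∘L (((fderiv ℝ φ x).comp π₁).smulRight v)
        = ((fderiv ℝ φ x).comp π₁).smulRight ((tproj x) v) := by
      ext w; simp
    rw [hcomp]
    exact trace_smulRight_aux (((fderiv ℝ φ x).comp π₁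
      : WithLp 2 (EuclideanSpace ℝ (Fin k) × EuclideanSpace ℝ (Fin m)) →L[ℝ] ℝ)
      : WithLp 2 (EuclideanSpace ℝ (Fin k) × EuclideanSpace ℝ (Fin m)) →ₗ[ℝ] ℝ)
      ((tproj x) v)
  -- the projection of the vertical vector
  set ux : EuclideanSpace ℝ (Fin k) → EuclideanSpace ℝ (Fin k) := fun x =>
    WithLp.toLp 2 (fun i => ∑ j, ginv x i j * fderiv ℝ f x (EuclideanSpace.single j 1) b)
    with huxdef
  have hproj : ∀ x, (tproj x) v =
      (WithLp.equiv 2 (EuclideanSpace ℝ (Fin k) × EuclideanSpace ℝ (Fin m))).symm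
        (ux x, fderiv ℝ f x (ux x)) := by
    intro x
    rw [htproj x]
    have := proj_formula (fderiv ℝ f x) b
      (Matrix.of fun i j => (if i = j then (1:ℝ) else 0)
        + ∑ a, fderiv ℝ f x (EuclideanSpace.single i 1) a
            * fderiv ℝ f x (EuclideanSpace.single j 1) a)
      (fun i j => rfl) (ux x)
      (fun i => by simp only [huxdef, hginv, PiLp.toLp_apply])
    rw [hvdef]
    simpa using this
  -- pointwise identity for the left-hand side integrand
  have hintegrand : ∀ x, (LinearMap.trace ℝ
        (WithLp 2 (EuclideanSpace ℝ (Fin k) × EuclideanSpace ℝ (Fin m))))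
      (((tproj x) ∘L (fderiv ℝ X (ι x)))
        : WithLp 2 (EuclideanSpace ℝ (Fin k) × EuclideanSpace ℝ (Fin m)) →ₗ[ℝ]
          WithLp 2 (EuclideanSpace ℝ (Fin k) × EuclideanSpace ℝ (Fin m))) * sg x
      = ∑ i, ∑ j, sg x * ginv x i j
          * fderiv ℝ f x (EuclideanSpace.single j 1) b
          * fderiv ℝ φ x (EuclideanSpace.single i 1) := by
    intro x
    rw [htr x, hproj x]
    have hπ : π₁ ((WithLp.equiv 2
        (EuclideanSpace ℝ (Fin k) × EuclideanSpace ℝ (Fin m))).symm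
        (ux x, fderiv ℝ f x (ux x))) = ux x := rfl
    rw [hπ]
    have hdec : fderiv ℝ φ x (ux x)
        = ∑ i, ux x i * fderiv ℝ φ x (EuclideanSpace.single i 1) := by
      conv_lhs => rw [← (EuclideanSpace.basisFun (Fin k) ℝ).sum_repr (ux x)]
      simp [EuclideanSpace.basisFun_repr]
    rw [hdec, Finset.sum_mul]
    refine Finset.sum_congr rfl fun i _ => ?_
    have hux : ux x i = ∑ j, ginv x i j * fderiv ℝ f x (EuclideanSpace.single j 1) b := rfl
    rw [hux, Finset.sum_mul, Finset.sum_mul]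
    exact Finset.sum_congr rfl fun j _ => by ring
  -- pointwise identity for the right-hand side integrand
  have hRHS : ∀ x, ⟪X (ι x), h (ι x)⟫ * sg x
      = sg x * ((WithLp.equiv 2
          (EuclideanSpace ℝ (Fin k) × EuclideanSpace ℝ (Fin m)) (h (ι x))).2 b)
        * φ x := by
    intro x
    have hinner : ⟪v, h (ι x)⟫ = (WithLp.equiv 2
        (EuclideanSpace ℝ (Fin k) × EuclideanSpace ℝ (Fin m)) (h (ι x))).2 b := by
      rw [hvdef]
      simp [WithLp.prod_inner_apply, EuclideanSpace.inner_single_left]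
    have hXι : X (ι x) = (φ x * χ (f x)) • v := by
      rw [hXdef]; simp only [hπ₁ι, hπ₂ι]
    rw [hXι, real_inner_smul_left, hinner]
    by_cases hx : x ∈ tsupport φ
    · have h1 : (χ (f x) : ℝ) = 1 :=
        χ.one_of_mem_closedBall (Metric.ball_subset_closedBall (hRsub ⟨x, hx, rfl⟩))
      rw [h1]; ring
    · rw [image_eq_zero_of_notMem_tsupport hx]; ring
  -- continuity facts
  have hfd : Continuous fun x => fderiv ℝ f x := hf.continuous_fderiv one_ne_zero
  have hφd : Continuous fun x => fderiv ℝ φ x := hφ.continuous_fderiv one_ne_zero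
  have hentry : ∀ (j : Fin k) (a : Fin m), Continuous fun x =>
      fderiv ℝ f x (EuclideanSpace.single j 1) a := by
    intro j a
    have h1 : Continuous fun x => fderiv ℝ f x (EuclideanSpace.single j 1) :=
      hfd.clm_apply continuous_const
    exact (PiLp.proj (𝕜 := ℝ) 2 (fun _ : Fin m => ℝ) a).continuous.comp h1
  have hφentry : ∀ i : Fin k, Continuous fun x =>
      fderiv ℝ φ x (EuclideanSpace.single i 1) := fun i => hφd.clm_apply continuous_const
  have hGmc : Continuous fun x => (Matrix.of fun i j =>
      (if i = j then (1:ℝ) else 0) + ∑ a, fderiv ℝ f x (EuclideanSpace.single i 1) a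
        * fderiv ℝ f x (EuclideanSpace.single j 1) a : Matrix (Fin k) (Fin k) ℝ) := by
    refine continuous_matrix fun i j => ?_
    exact continuous_const.add
      (continuous_finset_sum _ fun a _ => (hentry i a).mul (hentry j a))
  have hdetc : Continuous fun x => (Matrix.of fun i j =>
      (if i = j then (1:ℝ) else 0) + ∑ a, fderiv ℝ f x (EuclideanSpace.single i 1) a
        * fderiv ℝ f x (EuclideanSpace.single j 1) a : Matrix (Fin k) (Fin k) ℝ).det :=
    hGmc.matrix_det
  have hdetpos : ∀ x, 0 < (Matrix.of fun i j =>
      (if i = j then (1:ℝ) else 0) + ∑ a, fderiv ℝ f x (EuclideanSpace.single i 1) a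
        * fderiv ℝ f x (EuclideanSpace.single j 1) a : Matrix (Fin k) (Fin k) ℝ).det :=
    fun x => (graph_posDef (fderiv ℝ f x)).det_pos
  have hsgc : Continuous sg := by
    have : sg = fun x => Real.sqrt (Matrix.of fun i j =>
        (if i = j then (1:ℝ) else 0) + ∑ a, fderiv ℝ f x (EuclideanSpace.single i 1) a
          * fderiv ℝ f x (EuclideanSpace.single j 1) a : Matrix (Fin k) (Fin k) ℝ).det :=
      funext hsg
    rw [this]
    exact Real.continuous_sqrt.comp hdetc
  have hginvc : ∀ i j : Fin k, Continuous fun x => ginv x i j := by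
    intro i j
    have heq : (fun x => ginv x i j) = fun x =>
        ((Matrix.of fun i j => (if i = j then (1:ℝ) else 0)
          + ∑ a, fderiv ℝ f x (EuclideanSpace.single i 1) a
            * fderiv ℝ f x (EuclideanSpace.single j 1) a : Matrix (Fin k) (Fin k) ℝ).det)⁻¹
        * (Matrix.of fun i j => (if i = j then (1:ℝ) else 0)
          + ∑ a, fderiv ℝ f x (EuclideanSpace.single i 1) a
            * fderiv ℝ f x (EuclideanSpace.single j 1) a
              : Matrix (Fin k) (Fin k) ℝ).adjugate i j := by
      funext x
      rw [hginv x, Matrix.inv_def, Ring.inverse_eq_inv]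
      rfl
    rw [heq]
    exact (hdetc.inv₀ fun x => (hdetpos x).ne').mul
      ((continuous_apply j).comp ((continuous_apply i).comp hGmc.matrix_adjugate))
  have hFint : ∀ i j : Fin k, Integrable (fun x => sg x * ginv x i j
      * fderiv ℝ f x (EuclideanSpace.single j 1) b
      * fderiv ℝ φ x (EuclideanSpace.single i 1)) volume := by
    intro i j
    apply Continuous.integrable_of_hasCompactSupport
    · exact ((hsgc.mul (hginvc i j)).mul (hentry j b)).mul (hφentry i)
    · apply HasCompactSupport.intro hK
      intro x hx
      have h0 : fderiv ℝ φ x = 0 :=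
        Function.notMem_support.mp fun hs => hx (support_fderiv_subset ℝ hs)
      rw [h0]
      simp
  have hmeas : MeasurableSet Ω := hΩ.measurableSet
  have key := hfv X hXcd hXcs hXΩ
  calc ∑ i, ∑ j, ∫ x in Ω, sg x * ginv x i j
          * fderiv ℝ f x (EuclideanSpace.single j 1) b
          * fderiv ℝ φ x (EuclideanSpace.single i 1)
      = ∑ i, ∫ x in Ω, ∑ j, sg x * ginv x i j
          * fderiv ℝ f x (EuclideanSpace.single j 1) b
          * fderiv ℝ φ x (EuclideanSpace.single i 1) :=
        Finset.sum_congr rfl fun i _ =>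
          (integral_finset_sum _ fun j _ => (hFint i j).integrableOn).symm
    _ = ∫ x in Ω, ∑ i, ∑ j, sg x * ginv x i j
          * fderiv ℝ f x (EuclideanSpace.single j 1) b
          * fderiv ℝ φ x (EuclideanSpace.single i 1) :=
        (integral_finset_sum _ fun i _ =>
          integrable_finset_sum _ fun j _ => (hFint i j).integrableOn).symm
    _ = ∫ x in Ω, (LinearMap.trace ℝ
          (WithLp 2 (EuclideanSpace ℝ (Fin k) × EuclideanSpace ℝ (Fin m))))
          (((tproj x) ∘L (fderiv ℝ X (ι x)))
            : WithLp 2 (EuclideanSpace ℝ (Fin k) × EuclideanSpace ℝ (Fin m)) →ₗ[ℝ]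
              WithLp 2 (EuclideanSpace ℝ (Fin k) × EuclideanSpace ℝ (Fin m))) * sg x :=
        (setIntegral_congr_fun hmeas fun x _ => hintegrand x).symm
    _ = -∫ x in Ω, ⟪X (ι x), h (ι x)⟫ * sg x := key
    _ = -∫ x in Ω, sg x * ((WithLp.equiv 2
            (EuclideanSpace ℝ (Fin k) × EuclideanSpace ℝ (Fin m)) (h (ι x))).2 b)
          * φ x := by
        rw [setIntegral_congr_fun hmeas fun x _ => hRHS x]
end
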